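/- Let Λ be a ring and let P be a class of right Λ-modules that is closed under isomorphisms, submodules, quotient modules, arbitrary (small) direct sums, and arbitrary (small) direct products. Then there exists a unique two-sided ideal I of Λ such that for every right Λ-module M, M belongs to P if and only if M·I = 0 (i.e. m·i = 0 for all m ∈ M and i ∈ I). Conversely, for every two-sided ideal I of Λ, the class of right Λ-modules M with M·I = 0 is closed under isomorphisms, submodules, quotient modules, arbitrary direct sums, and arbitrary direct products. -/

import Mathlib

universe u

open DirectSum MulOpposite

/-- For a ring `Λ`, a right `Λ`-module is a left `Λᵐᵒᵖ`-module; `M · I = 0` means every element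
of the (two-sided) ideal `I ⊆ Λ` acts as zero on `M`. -/
def AnnihilatedBy (Λ : Type u) [Ring Λ] (I : Ideal Λ)
    (M : Type u) [AddCommGroup M] [Module Λᵐᵒᵖ M] : Prop :=
  ∀ (m : M) (i : Λ), i ∈ I → op i • m = 0

section Aux

variable {Λ : Type u} [Ring Λ]

/-- The left ideal of `Λᵐᵒᵖ` corresponding to a two-sided ideal `I` of `Λ`. -/
def oppIdeal (I : Ideal Λ) (hI : ∀ i ∈ I, ∀ r : Λ, i * r ∈ I) : Submodule Λᵐᵒᵖ Λᵐᵒᵖ where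
  carrier := {x | unop x ∈ I}
  add_mem' := fun ha hb => by simpa using I.add_mem ha hb
  zero_mem' := by simp [I.zero_mem]
  smul_mem' := fun c x hx => by
    show unop (c * x) ∈ I
    rw [unop_mul]
    exact hI _ hx _

lemma ann_opp_quot (I : Ideal Λ) (hI : ∀ i ∈ I, ∀ r : Λ, i * r ∈ I) :
    AnnihilatedBy Λ I (Λᵐᵒᵖ ⧸ oppIdeal I hI) := by
  intro m i hi
  obtain ⟨x, rfl⟩ := Submodule.Quotient.mk_surjective _ m
  rw [← Submodule.Quotient.mk_smul, Submodule.Quotient.mk_eq_zero]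
  show unop (op i • x) ∈ I
  rw [smul_eq_mul, unop_mul, unop_op]
  exact I.mul_mem_left _ hi

lemma mem_of_opp_quot (I : Ideal Λ) (hI : ∀ i ∈ I, ∀ r : Λ, i * r ∈ I) (i : Λ)
    (h : op i • (Submodule.Quotient.mk 1 : Λᵐᵒᵖ ⧸ oppIdeal I hI) = 0) : i ∈ I := by
  rw [← Submodule.Quotient.mk_smul, Submodule.Quotient.mk_eq_zero] at h
  have : unop (op i • (1 : Λᵐᵒᵖ)) ∈ I := h
  simpa using this

end Aux

theorem stmt5 (Λ : Type u) [Ring Λ] :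
    (∀ P : (M : Type u) → [AddCommGroup M] → [Module Λᵐᵒᵖ M] → Prop,
      -- closed under isomorphisms
      (∀ (M N : Type u) [AddCommGroup M] [Module Λᵐᵒᵖ M] [AddCommGroup N] [Module Λᵐᵒᵖ N],
        (M ≃ₗ[Λᵐᵒᵖ] N) → P M → P N) →
      -- closed under submodules
      (∀ (M : Type u) [AddCommGroup M] [Module Λᵐᵒᵖ M] (N : Submodule Λᵐᵒᵖ M), P M → P N) →
      -- closed under quotient modules
      (∀ (M : Type u) [AddCommGroup M] [Module Λᵐᵒᵖ M] (N : Submodule Λᵐᵒᵖ M), P M → P (M ⧸ N)) →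
      -- closed under small direct sums
      (∀ (ι : Type u) (M : ι → Type u) [∀ i, AddCommGroup (M i)] [∀ i, Module Λᵐᵒᵖ (M i)],
        (∀ i, P (M i)) → P (⨁ i, M i)) →
      -- closed under small direct products
      (∀ (ι : Type u) (M : ι → Type u) [∀ i, AddCommGroup (M i)] [∀ i, Module Λᵐᵒᵖ (M i)],
        (∀ i, P (M i)) → P (∀ i, M i)) →
      -- conclusion: a unique two-sided ideal whose annihilated modules are exactly those in `P`
      ∃ I : Ideal Λ, (∀ i ∈ I, ∀ r : Λ, i * r ∈ I) ∧
        (∀ (M : Type u) [AddCommGroup M] [Module Λᵐᵒᵖ M], P M ↔ AnnihilatedBy Λ I M) ∧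
        ∀ I' : Ideal Λ, (∀ i ∈ I', ∀ r : Λ, i * r ∈ I') →
          (∀ (M : Type u) [AddCommGroup M] [Module Λᵐᵒᵖ M], P M ↔ AnnihilatedBy Λ I' M) →
          I' = I)
    ∧
    -- converse: for every two-sided ideal `I`, the annihilated class has the closure properties
    (∀ I : Ideal Λ, (∀ i ∈ I, ∀ r : Λ, i * r ∈ I) →
      (∀ (M N : Type u) [AddCommGroup M] [Module Λᵐᵒᵖ M] [AddCommGroup N] [Module Λᵐᵒᵖ N],
        (M ≃ₗ[Λᵐᵒᵖ] N) → AnnihilatedBy Λ I M → AnnihilatedBy Λ I N) ∧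
      (∀ (M : Type u) [AddCommGroup M] [Module Λᵐᵒᵖ M] (N : Submodule Λᵐᵒᵖ M),
        AnnihilatedBy Λ I M → AnnihilatedBy Λ I N) ∧
      (∀ (M : Type u) [AddCommGroup M] [Module Λᵐᵒᵖ M] (N : Submodule Λᵐᵒᵖ M),
        AnnihilatedBy Λ I M → AnnihilatedBy Λ I (M ⧸ N)) ∧
      (∀ (ι : Type u) (M : ι → Type u) [∀ i, AddCommGroup (M i)] [∀ i, Module Λᵐᵒᵖ (M i)],
        (∀ i, AnnihilatedBy Λ I (M i)) → AnnihilatedBy Λ I (⨁ i, M i)) ∧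
      (∀ (ι : Type u) (M : ι → Type u) [∀ i, AddCommGroup (M i)] [∀ i, Module Λᵐᵒᵖ (M i)],
        (∀ i, AnnihilatedBy Λ I (M i)) → AnnihilatedBy Λ I (∀ i, M i))) := by
  constructor
  · intro P hIso hSub hQuot hSum hProd
    classical
    -- the common annihilator of all modules in `P`
    set I : Ideal Λ :=
      { carrier := {i | ∀ (M : Type u) [AddCommGroup M] [Module Λᵐᵒᵖ M],
          P M → ∀ m : M, op i • m = 0}
        add_mem' := by
          intro a b ha hb M _ _ hM m
          rw [op_add, add_smul, ha M hM m, hb M hM m, add_zero]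
        zero_mem' := by
          intro M _ _ hM m
          rw [op_zero, zero_smul]
        smul_mem' := by
          intro c i hi M _ _ hM m
          rw [smul_eq_mul, op_mul, mul_smul]
          exact hi M hM (op c • m) } with hIdef
    have hmem : ∀ i : Λ, i ∈ I ↔ ∀ (M : Type u) [AddCommGroup M] [Module Λᵐᵒᵖ M],
        P M → ∀ m : M, op i • m = 0 := fun i => Iff.rfl
    have htwo : ∀ i ∈ I, ∀ r : Λ, i * r ∈ I := by
      intro i hi r M _ _ hM m
      rw [op_mul, mul_smul, hi M hM m, smul_zero]
    set J := oppIdeal I htwo with hJ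
    set Q := (Λᵐᵒᵖ ⧸ J) with hQ
    -- Step 1: `Q = Λᵐᵒᵖ ⧸ J ∈ P`
    have hwit : ∀ x : {i : Λ // i ∉ I}, ∃ (M : Type u) (_ : AddCommGroup M),
        ∃ (_ : Module Λᵐᵒᵖ M), P M ∧ ∃ m : M, op x.1 • m ≠ 0 := by
      rintro ⟨i, hi⟩
      rw [hmem] at hi
      push_neg at hi
      obtain ⟨M, iM, iM', hPM, m, hm⟩ := hi
      exact ⟨M, iM, iM', hPM, m, hm⟩
    choose W iW iW' hPW w hw using hwit
    letI := iW
    letI := iW'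
    have hPprod : P (∀ x, W x) := hProd _ W hPW
    set f : Λᵐᵒᵖ →ₗ[Λᵐᵒᵖ] (∀ x, W x) :=
      LinearMap.pi (fun x => LinearMap.toSpanSingleton Λᵐᵒᵖ (W x) (w x)) with hf
    have hker : LinearMap.ker f = J := by
      ext r
      simp only [LinearMap.mem_ker, hf, LinearMap.pi_apply, LinearMap.toSpanSingleton_apply]
      constructor
      · intro h
        show unop r ∈ I
        by_contra hr
        exact hw ⟨unop r, hr⟩ (by simpa using congrFun h ⟨unop r, hr⟩)
      · intro h
        have h' : unop r ∈ I := h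
        funext x
        simpa using h' (W x) (hPW x) (w x)
    have hPQ : P Q := by
      refine hIso _ _ ?_ (hSub _ (LinearMap.range f) hPprod)
      exact ((Submodule.quotEquivOfEq _ _ hker.symm).trans
        (f.quotKerEquivRange)).symm
    refine ⟨I, htwo, ?_, ?_⟩
    · intro M _ _
      constructor
      · intro hPM m i hi
        exact hi M hPM m
      · intro hAnn
        -- `M` is a quotient of a direct sum of copies of `Q`
        set φ : ∀ _ : M, Q →ₗ[Λᵐᵒᵖ] M := fun m =>
          Submodule.liftQ J (LinearMap.toSpanSingleton Λᵐᵒᵖ M m)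
            (by
              intro r hr
              have : unop r ∈ I := hr
              simpa [LinearMap.toSpanSingleton_apply] using hAnn m (unop r) this) with hφ
        set g : (⨁ _ : M, Q) →ₗ[Λᵐᵒᵖ] M := DirectSum.toModule Λᵐᵒᵖ M M φ with hg
        have hsurj : Function.Surjective g := by
          intro m
          refine ⟨DirectSum.lof Λᵐᵒᵖ M (fun _ => Q) m (Submodule.Quotient.mk 1), ?_⟩
          rw [hg, DirectSum.toModule_lof, hφ]
          rw [Submodule.liftQ_apply, LinearMap.toSpanSingleton_apply, one_smul]
        have hPsum : P (⨁ _ : M, Q) := hSum M (fun _ => Q) (fun _ => hPQ)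
        letI : AddCommGroup Q := Submodule.Quotient.addCommGroup J
        exact hIso _ _ (g.quotKerEquivOfSurjective hsurj)
          (hQuot _ (LinearMap.ker g) hPsum)
    · intro I' htwo' hiff'
      ext i
      constructor
      · intro hi
        rw [hmem]
        intro M _ _ hPM m
        exact (hiff' M).mp hPM m i hi
      · intro hi
        have hQ' : P (Λᵐᵒᵖ ⧸ oppIdeal I' htwo') :=
          (hiff' _).mpr (ann_opp_quot I' htwo')
        exact mem_of_opp_quot I' htwo' i (hi _ hQ' _)
  · intro I htwo
    refine ⟨?_, ?_, ?_, ?_, ?_⟩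
    · intro M N _ _ _ _ e hM n i hi
      have : op i • e.symm n = 0 := hM _ i hi
      calc op i • n = e (op i • e.symm n) := by rw [map_smul, e.apply_symm_apply]
        _ = 0 := by rw [this, map_zero]
    · intro M _ _ N hM n i hi
      ext
      simpa using hM (n : M) i hi
    · intro M _ _ N hM m i hi
      obtain ⟨x, rfl⟩ := Submodule.Quotient.mk_surjective _ m
      rw [← Submodule.Quotient.mk_smul, hM x i hi, Submodule.Quotient.mk_zero]
    · intro ι M _ _ hM m i hi
      classical
      refine DFinsupp.ext fun j => ?_
      have := hM j (m j) i hi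
      simpa [DirectSum.smul_apply] using this
    · intro ι M _ _ hM m i hi
      funext j
      simpa using hM j (m j) i hi
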